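/- Let q_n denote continuants. For positive integers a_1,…,a_n and 1 ≤ k ≤ n, deleting the k-th entry satisfies (a_k+1)/2 ≤ q_n(a_1,…,a_n) / q_{n−1}(a_1,…,a_{k−1},a_{k+1},…,a_n) ≤ a_k+1. -/

import Mathlib

noncomputable def gaussMap (x : ℝ) : ℝ := if x = 0 then 0 else 1/x - ⌊1/x⌋

noncomputable def cfA (n : ℕ) (x : ℝ) : ℕ := ⌊1 / (gaussMap^[n] x)⌋₊

def K : List ℕ → ℕ
  | [] => 1
  | [a] => a
  | a :: b :: l => a * K (b :: l) + K l

def cylinder (l : List ℕ) : Set ℝ :=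
  {x | x ∈ Set.Ico (0:ℝ) 1 ∧ ∀ i, i < l.length → cfA i x = l.getD i 0}

noncomputable def hContent (t : ℝ) (A : Set ℝ) : ENNReal :=
  ⨅ (c : ℕ → Set ℝ) (_ : A ⊆ ⋃ i, c i) (_ : ∀ i, ∃ x r, c i = Metric.ball x r),
    ∑' i, EMetric.diam (c i) ^ t

/-- K of the list with last entry removed (0 for the empty list). -/
def Kd : List ℕ → ℕ
  | [] => 0
  | [_] => 1
  | a :: b :: l => a * Kd (b :: l) + Kd l

/-- K of the tail (0 for the empty list). -/
def Kt : List ℕ → ℕ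
  | [] => 0
  | _ :: l => K l

lemma K_cons (a : ℕ) (v : List ℕ) : K (a :: v) = a * K v + Kt v := by
  cases v with
  | nil => simp [K, Kt]
  | cons b l => simp [K, Kt]

lemma K_split (u v : List ℕ) : K (u ++ v) = K u * K v + Kd u * Kt v := by
  induction u using K.induct with
  | case1 => simp [K, Kd]
  | case2 a => simpa [K, Kd, one_mul] using K_cons a v
  | case3 a b w ih1 ih2 =>
      have : (a :: b :: w) ++ v = a :: b :: (w ++ v) := rfl
      rw [this]
      show a * K (b :: (w ++ v)) + K (w ++ v) = _
      have hb : (b :: w) ++ v = b :: (w ++ v) := rfl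
      rw [← hb, ih1, ih2]
      show _ = (a * K (b :: w) + K w) * K v + (a * Kd (b :: w) + Kd w) * Kt v
      ring

lemma K_pos (l : List ℕ) (h : ∀ b ∈ l, 0 < b) : 0 < K l := by
  induction l using K.induct with
  | case1 => simp [K]
  | case2 a => simpa [K] using h a (by simp)
  | case3 a b w ih1 ih2 =>
      have ha : 0 < a := h a (by simp)
      have := ih1 (fun x hx => h x (by simp [hx]))
      show 0 < a * K (b :: w) + K w
      positivity

lemma Kd_le_K (l : List ℕ) (h : ∀ b ∈ l, 0 < b) : Kd l ≤ K l := by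
  induction l using K.induct with
  | case1 => simp [K, Kd]
  | case2 a => simpa [K, Kd, Nat.one_le_iff_ne_zero, Nat.pos_iff_ne_zero] using h a (by simp)
  | case3 a b w ih1 ih2 =>
      have h1 := ih1 (fun x hx => h x (by simp [hx]))
      have h2 := ih2 (fun x hx => h x (by simp [hx]))
      show a * Kd (b :: w) + Kd w ≤ a * K (b :: w) + K w
      exact Nat.add_le_add (Nat.mul_le_mul_left a h1) h2

lemma Kt_le_K (l : List ℕ) (h : ∀ b ∈ l, 0 < b) : Kt l ≤ K l := by
  cases l with
  | nil => simp [K, Kt]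
  | cons a m =>
      have ha : 1 ≤ a := h a (by simp)
      calc Kt (a :: m) = K m := rfl
        _ ≤ a * K m + Kt m := by nlinarith [Nat.zero_le (Kt m)]
        _ = K (a :: m) := (K_cons a m).symm

theorem continuant_delete_entry (l₁ l₂ : List ℕ) (a : ℕ) (ha : 0 < a)
    (h₁ : ∀ b ∈ l₁, 0 < b) (h₂ : ∀ b ∈ l₂, 0 < b) :
    ((a:ℝ) + 1) / 2 ≤ (K (l₁ ++ a :: l₂) : ℝ) / (K (l₁ ++ l₂) : ℝ) ∧
    (K (l₁ ++ a :: l₂) : ℝ) / (K (l₁ ++ l₂) : ℝ) ≤ (a:ℝ) + 1 := by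
  have hN : K (l₁ ++ a :: l₂) = K l₁ * (a * K l₂ + Kt l₂) + Kd l₁ * K l₂ := by
    rw [K_split, K_cons]; rfl
  have hDen : K (l₁ ++ l₂) = K l₁ * K l₂ + Kd l₁ * Kt l₂ := K_split l₁ l₂
  have hApos : (0:ℝ) < K l₁ := by exact_mod_cast K_pos l₁ h₁
  have hCpos : (0:ℝ) < K l₂ := by exact_mod_cast K_pos l₂ h₂
  have hBA : (Kd l₁ : ℝ) ≤ K l₁ := by exact_mod_cast Kd_le_K l₁ h₁
  have hDC : (Kt l₂ : ℝ) ≤ K l₂ := by exact_mod_cast Kt_le_K l₂ h₂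
  have hB0 : (0:ℝ) ≤ Kd l₁ := by positivity
  have hD0 : (0:ℝ) ≤ Kt l₂ := by positivity
  have ha1 : (1:ℝ) ≤ a := by exact_mod_cast ha
  have hDenPos : (0:ℝ) < (K (l₁ ++ l₂) : ℝ) := by
    have p1 := K_pos l₁ h₁
    have p2 := K_pos l₂ h₂
    have : 0 < K (l₁ ++ l₂) := by rw [hDen]; positivity
    exact_mod_cast this
  set A := (K l₁ : ℝ)
  set B := (Kd l₁ : ℝ)
  set C := (K l₂ : ℝ)
  set D := (Kt l₂ : ℝ)
  have hBDAC : B * D ≤ A * C :=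
    mul_le_mul hBA hDC hD0 (le_of_lt hApos)
  constructor
  · rw [div_le_div_iff₀ (by norm_num) hDenPos, hN, hDen]
    push_cast
    nlinarith [mul_nonneg (sub_nonneg.2 ha1) (sub_nonneg.2 hBDAC),
      mul_nonneg (sub_nonneg.2 hBA) hD0,
      mul_nonneg hB0 (le_of_lt hCpos)]
  · rw [div_le_iff₀ hDenPos, hN, hDen]
    push_cast
    nlinarith [mul_nonneg (sub_nonneg.2 hBA) (sub_nonneg.2 hDC),
      mul_nonneg hB0 hD0,
      mul_nonneg (sub_nonneg.2 ha1) (mul_nonneg hB0 hD0)]
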